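/- Monotonicity of the image under φ: for any z ∈ (−1,1]^N and M > 0, the vector b defined recursively by b₁ = M z₁ and b_i = ½(b_{i−1} − M) + ½(b_{i−1} + M) z_i satisfies −M < b_N ≤ b_{N−1} ≤ ⋯ ≤ b₁ ≤ M, with b_i < b_{i−1} whenever z_i < 1. -/
import Mathlib


/-- The map φ: given `z`, define `b` recursively by `b 0 = M * z 0` and
`b (i+1) = (b i - M)/2 + ((b i + M)/2) * z (i+1)`. -/
noncomputable def phiVec (M : ℝ) (z : ℕ → ℝ) : ℕ → ℝ
  | 0 => M * z 0
  | i + 1 => (phiVec M z i - M) / 2 + ((phiVec M z i + M) / 2) * z (i + 1)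

theorem phi_image_monotone
    (M : ℝ) (hM : 0 < M) (N : ℕ) (hN : 1 ≤ N)
    (z : ℕ → ℝ) (hz : ∀ i, i < N → z i ∈ Set.Ioc (-1 : ℝ) 1) :
    (∀ i, i < N → -M < phiVec M z i ∧ phiVec M z i ≤ M)
    ∧ (∀ i, i + 1 < N → phiVec M z (i + 1) ≤ phiVec M z i)
    ∧ (∀ i, i + 1 < N → z (i + 1) < 1 → phiVec M z (i + 1) < phiVec M z i) := by
  have hb : ∀ i, i < N → -M < phiVec M z i ∧ phiVec M z i ≤ M := by
    intro i
    induction i with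
    | zero =>
      intro h
      obtain ⟨h1, h2⟩ := hz 0 h
      simp only [phiVec]
      constructor <;> nlinarith
    | succ n ih =>
      intro h
      obtain ⟨h1, h2⟩ := ih (Nat.lt_of_succ_lt h)
      obtain ⟨h3, h4⟩ := hz (n + 1) h
      simp only [phiVec]
      constructor <;> nlinarith
  refine ⟨hb, ?_, ?_⟩
  · intro i hi
    obtain ⟨h1, h2⟩ := hb i (Nat.lt_of_succ_lt hi)
    have h4 := (hz (i + 1) hi).2
    simp only [phiVec]
    nlinarith
  · intro i hi hzi
    obtain ⟨h1, h2⟩ := hb i (Nat.lt_of_succ_lt hi)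
    simp only [phiVec]
    nlinarith
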